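/- arXiv:1706.00389 — 2 statements merged into one kernel-verified Lean document; each statement's English description precedes it below -/
import Mathlib

section
/- Conversely, if f : Ω → ℝ is measurable on a finite-measure set Ω and L := limsup_{p→∞} p⁻¹ ‖f‖_{L^p(Ω)} < ∞, then for every γ with 0 < γ < (L e)⁻¹ one has ∫_Ω exp(γ|f|) dx < ∞. -/
open MeasureTheory Filter

/-- Conversely, if `f` is measurable on a finite-measure set `Ω` and
`L := limsup_{p→∞} p⁻¹ ‖f‖_{L^p(Ω)} < ∞` (expressed by: for every `L' > L` one has
`‖f‖_{L^p} ≤ L' p` for all large integers `p`), then `exp (γ |f|)` is integrable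
on `Ω` for every `γ > 0` with `γ L e < 1`. -/
theorem exp_integrable_of_lp_norm_linear_growth (n : ℕ) (Ω : Set (Fin n → ℝ))
    (hΩ : MeasurableSet Ω) (hΩfin : volume Ω < ⊤)
    (f : (Fin n → ℝ) → ℝ) (hf : Measurable f)
    (hfp : ∀ p : ℕ, 1 ≤ p → IntegrableOn (fun x => |f x| ^ (p : ℝ)) Ω volume)
    (L : ℝ) (hL : 0 ≤ L)
    (hlimsup : ∀ L' : ℝ, L < L' → ∀ᶠ p : ℕ in atTop,
      (∫ x in Ω, |f x| ^ (p : ℝ)) ^ (1 / (p : ℝ)) ≤ L' * p) :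
    ∀ γ : ℝ, 0 < γ → γ * (L * Real.exp 1) < 1 →
      IntegrableOn (fun x => Real.exp (γ * |f x|)) Ω volume := by
  intro γ hγ hγ1
  set e : ℝ := Real.exp 1 with he
  have he0 : (0:ℝ) < e := Real.exp_pos 1
  have hγe : 0 < γ * e := mul_pos hγ he0
  -- choose L' strictly between L and 1/(γ e)
  set L' : ℝ := (L + 1 / (γ * e)) / 2 with hL'def
  have hLM : L < 1 / (γ * e) := by
    rw [lt_div_iff₀ hγe]; nlinarith
  have hLL' : L < L' := by simp only [hL'def]; linarith
  have hL'0 : 0 < L' := lt_of_le_of_lt hL hLL'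
  have hL'M : L' < 1 / (γ * e) := by simp only [hL'def]; linarith
  set r : ℝ := γ * L' * e with hrdef
  have hr0 : 0 ≤ r := by positivity
  have hr1 : r < 1 := by
    have := (lt_div_iff₀ hγe).1 hL'M
    nlinarith
  -- get the index beyond which the L^p bound holds
  obtain ⟨N₀, hN₀⟩ := eventually_atTop.1 (hlimsup L' hLL')
  set N : ℕ := max N₀ 1 with hNdef
  have hN1 : 1 ≤ N := le_max_right _ _
  -- key integral bound for p ≥ N
  have key : ∀ p : ℕ, N ≤ p → (∫ x in Ω, |f x| ^ (p : ℝ)) ≤ (L' * p) ^ p := by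
    intro p hp
    have hp1 : 1 ≤ p := le_trans hN1 hp
    have hppos : (0:ℝ) < p := by exact_mod_cast hp1
    have hIb := hN₀ p (le_trans (le_max_left _ _) hp)
    have hI0 : 0 ≤ ∫ x in Ω, |f x| ^ (p : ℝ) :=
      integral_nonneg fun x => Real.rpow_nonneg (abs_nonneg _) _
    set a : ℝ := ∫ x in Ω, |f x| ^ (p : ℝ)
    have haeq : (a ^ (1 / (p:ℝ))) ^ (p:ℝ) = a := by
      rw [← Real.rpow_mul hI0,
        one_div, inv_mul_cancel₀ (ne_of_gt hppos), Real.rpow_one]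
    calc a = (a ^ (1 / (p:ℝ))) ^ (p:ℝ) := haeq.symm
      _ ≤ (L' * p) ^ (p:ℝ) :=
          Real.rpow_le_rpow (Real.rpow_nonneg hI0 _) hIb hppos.le
      _ = (L' * p) ^ p := Real.rpow_natCast _ _
  -- the series terms
  set F : ℕ → (Fin n → ℝ) → ℝ := fun p x => (γ * |f x|) ^ p / ((Nat.factorial p : ℕ) : ℝ) with hFdef
  have hFnn : ∀ p x, 0 ≤ F p x := fun p x => by
    apply div_nonneg _ (by positivity)
    exact pow_nonneg (by positivity) _
  have hFint : ∀ p : ℕ, IntegrableOn (F p) Ω volume := by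
    intro p
    rcases Nat.eq_zero_or_pos p with hp | hp
    · subst hp
      simp only [hFdef, pow_zero, Nat.factorial_zero, Nat.cast_one, div_one]
      exact integrableOn_const hΩfin.ne
    · have : F p = fun x => (γ ^ p / (Nat.factorial p)) * |f x| ^ (p : ℝ) := by
        funext x
        rw [Real.rpow_natCast, hFdef]
        ring
      rw [this]
      exact (hfp p hp).const_mul _
  -- pointwise expansion of exp into a tsum of ofReal's
  have hpt : ∀ t : ℝ, 0 ≤ t →
      ENNReal.ofReal (Real.exp t) = ∑' p : ℕ, ENNReal.ofReal (t ^ p / (Nat.factorial p)) := by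
    intro t ht
    rw [Real.exp_eq_exp_ℝ, NormedSpace.exp_eq_tsum_div]
    exact ENNReal.ofReal_tsum_of_nonneg
      (fun p => div_nonneg (pow_nonneg ht p) (by positivity))
      (Real.summable_pow_div_factorial t)
  -- measurability
  have hmeas : Measurable fun x => Real.exp (γ * |f x|) :=
    Real.measurable_exp.comp (measurable_const.mul hf.abs)
  refine ⟨hmeas.aestronglyMeasurable, ?_⟩
  rw [hasFiniteIntegral_iff_ofReal (Eventually.of_forall fun x => (Real.exp_pos _).le)]
  have hFmeas : ∀ p : ℕ, Measurable fun x => ENNReal.ofReal (F p x) := by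
    intro p
    exact (((measurable_const.mul hf.abs).pow_const p).div_const _).ennreal_ofReal
  have hrw : ∫⁻ x, ENNReal.ofReal (Real.exp (γ * |f x|)) ∂(volume.restrict Ω)
      = ∑' p : ℕ, ∫⁻ x, ENNReal.ofReal (F p x) ∂(volume.restrict Ω) := by
    rw [← lintegral_tsum fun p => (hFmeas p).aemeasurable]
    apply lintegral_congr fun x => ?_
    exact hpt (γ * |f x|) (by positivity)
  rw [hrw]
  set c : ℕ → ENNReal := fun p => ∫⁻ x, ENNReal.ofReal (F p x) ∂(volume.restrict Ω) with hcdef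
  -- each term is finite
  have hcfin : ∀ p, c p < ⊤ := by
    intro p
    have := (hFint p).2
    rwa [hasFiniteIntegral_iff_ofReal (Eventually.of_forall (hFnn p))] at this
  -- each term equals ofReal of the integral
  have hceq : ∀ p, c p = ENNReal.ofReal (∫ x in Ω, F p x) := by
    intro p
    exact (ofReal_integral_eq_lintegral_ofReal (hFint p)
      (Eventually.of_forall (hFnn p))).symm
  -- p^p / p! ≤ e^p
  have hfact : ∀ p : ℕ, (p:ℝ) ^ p / (Nat.factorial p) ≤ e ^ p := by
    intro p
    have h1 : (p:ℝ) ^ p / (Nat.factorial p) ≤ Real.exp p := by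
      refine le_trans ?_ (Real.sum_le_exp_of_nonneg (Nat.cast_nonneg p) (p + 1))
      exact Finset.single_le_sum (f := fun i => (p:ℝ) ^ i / (Nat.factorial i))
        (fun i _ => div_nonneg (pow_nonneg (Nat.cast_nonneg p) i) (by positivity))
        (Finset.self_mem_range_succ p)
    calc (p:ℝ) ^ p / (Nat.factorial p) ≤ Real.exp p := h1
      _ = e ^ p := by rw [he, ← Real.exp_nat_mul, mul_one]
  -- tail bound
  have htail : ∀ p : ℕ, N ≤ p → c p ≤ ENNReal.ofReal (r ^ p) := by
    intro p hp
    rw [hceq p]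
    apply ENNReal.ofReal_le_ofReal
    have hp1 : 1 ≤ p := le_trans hN1 hp
    have hFeq : (∫ x in Ω, F p x) = (γ ^ p / (Nat.factorial p)) * ∫ x in Ω, |f x| ^ (p:ℝ) := by
      rw [← integral_const_mul]
      apply integral_congr_ae (Eventually.of_forall fun x => ?_)
      rw [Real.rpow_natCast, hFdef]
      ring
    rw [hFeq]
    have hI := key p hp
    have hfac : (0:ℝ) < (Nat.factorial p) := by exact_mod_cast p.factorial_pos
    calc γ ^ p / (Nat.factorial p) * ∫ x in Ω, |f x| ^ (p:ℝ)
        ≤ γ ^ p / (Nat.factorial p) * (L' * p) ^ p := by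
          apply mul_le_mul_of_nonneg_left hI (by positivity)
      _ = (γ * L') ^ p * ((p:ℝ) ^ p / (Nat.factorial p)) := by
          rw [mul_pow, mul_pow]; ring
      _ ≤ (γ * L') ^ p * e ^ p := by
          apply mul_le_mul_of_nonneg_left (hfact p) (by positivity)
      _ = r ^ p := by rw [hrdef, ← mul_pow]
  -- assemble
  rw [← Summable.sum_add_tsum_nat_add' (f := c) (k := N) ENNReal.summable]
  apply ENNReal.add_lt_top.2
  constructor
  · exact ENNReal.sum_lt_top.2 fun p _ => hcfin p
  · have hsum : Summable fun p : ℕ => r ^ (p + N) :=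
      (summable_nat_add_iff N).2 (summable_geometric_of_lt_one hr0 hr1)
    calc ∑' p : ℕ, c (p + N)
        ≤ ∑' p : ℕ, ENNReal.ofReal (r ^ (p + N)) :=
          ENNReal.tsum_le_tsum fun p => htail _ (Nat.le_add_left N p)
      _ = ENNReal.ofReal (∑' p : ℕ, r ^ (p + N)) :=
          (ENNReal.ofReal_tsum_of_nonneg (fun p => pow_nonneg hr0 _) hsum).symm
      _ < ⊤ := ENNReal.ofReal_lt_top
end

section
/- Let Ω ⊆ ℝⁿ be bounded measurable, 1 ≤ p ≤ q ≤ ∞ with δ := 1/p − 1/q < 1/n, and f ∈ L^p(Ω). Define the Riesz potential I_Ω f(x) = ∫_Ω |x−y|^{1−n} |f(y)| dy. Then ‖I_Ω f‖_{L^q(Ω)} ≤ ((1−δ)/(1/n−δ))^{1−δ} ω_n^{1−1/n} |Ω|^{1/n−δ} ‖f‖_{L^p(Ω)}, where ω_n is the volume of the unit ball. -/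
open MeasureTheory ENNReal

noncomputable section

/-- The Riesz potential `I_Ω f (x) = ∫_Ω |x−y|^{1−n} |f(y)| dy` (ℝ≥0∞-valued). -/
def rieszPotential (n : ℕ) (Ω : Set (EuclideanSpace ℝ (Fin n)))
    (f : EuclideanSpace ℝ (Fin n) → ℝ) (x : EuclideanSpace ℝ (Fin n)) : ℝ≥0∞ :=
  ∫⁻ y in Ω, edist x y ^ ((1:ℝ) - n) * ENNReal.ofReal |f y|

open Set Metric in
lemma riesz_aux (n : ℕ) (hn : 1 ≤ n) (α : ℝ) (hα0 : 0 ≤ α) (hαn : α < n)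
    (A : Set (EuclideanSpace ℝ (Fin n))) (hAf : volume A ≠ ∞)
    (x : EuclideanSpace ℝ (Fin n)) :
    ∫⁻ y in A, edist x y ^ (-α) ≤
      ENNReal.ofReal ((n:ℝ) / (n - α)) *
        (volume (ball (0 : EuclideanSpace ℝ (Fin n)) 1)) ^ (α / n) *
        (volume A) ^ (1 - α / n) := by
  have hn' : (0:ℝ) < n := by exact_mod_cast hn
  set ω := volume (ball (0 : EuclideanSpace ℝ (Fin n)) 1) with hω
  have hω0 : ω ≠ 0 := (measure_ball_pos _ _ one_pos).ne'
  have hωt : ω ≠ ∞ := measure_ball_lt_top.ne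
  have hnα : (0:ℝ) < n - α := by linarith
  have hαne : α ≠ 0 ∨ True := Or.inr trivial
  rcases eq_or_lt_of_le hα0 with hα | hα
  · simp only [← hα, neg_zero, ENNReal.rpow_zero, zero_div, sub_zero, setLIntegral_one,
      Measure.restrict_apply_univ]
    rw [div_self hn'.ne', ENNReal.ofReal_one, one_mul, ENNReal.rpow_one, one_mul]
  -- now 0 < α
  rcases eq_or_ne (volume A) 0 with hA0 | hA0
  · rw [Measure.restrict_eq_zero.mpr hA0, lintegral_zero_measure]
    exact zero_le
  set Vr := (volume A).toReal with hVrdef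
  set wr := ω.toReal with hwrdef
  have hVr : 0 < Vr := ENNReal.toReal_pos hA0 hAf
  have hwr : 0 < wr := ENNReal.toReal_pos hω0 hωt
  set R := (Vr / wr) ^ ((n:ℝ))⁻¹ with hRdef
  have hR : 0 < R := Real.rpow_pos_of_pos (div_pos hVr hwr) _
  have hRn : R ^ (n:ℝ) = Vr / wr := by
    rw [hRdef, ← Real.rpow_mul (div_pos hVr hwr).le, inv_mul_cancel₀ hn'.ne', Real.rpow_one]
  set t₀ := R ^ (-α) with ht₀def
  have ht₀ : 0 < t₀ := Real.rpow_pos_of_pos hR _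
  set c : ℝ := -((n:ℝ)/α) with hcdef
  have hc : c < -1 := by
    rw [hcdef, neg_lt_neg_iff, lt_div_iff₀ hα]; linarith
  have hc1 : c + 1 < 0 := by linarith
  -- Step 1: rewrite as ofReal of the real function
  have step1 : ∫⁻ y in A, edist x y ^ (-α) =
      ∫⁻ y in A, ENNReal.ofReal (dist x y ^ (-α)) := by
    apply lintegral_congr_ae
    have hxnull : volume ({x} : Set (EuclideanSpace ℝ (Fin n))) = 0 := by
      rw [← Metric.closedBall_zero, MeasureTheory.Measure.addHaar_closedBall _ _ le_rfl]
      rw [finrank_euclideanSpace, Fintype.card_fin, zero_pow (by omega : n ≠ 0)]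
      simp
    have hx : ∀ᵐ y ∂(volume.restrict A), y ≠ x := by
      refine ae_restrict_of_ae ?_
      rw [ae_iff]
      refine measure_mono_null ?_ hxnull
      intro y hy
      simp only [ne_eq, not_not, mem_setOf_eq] at hy
      simp [hy]
    filter_upwards [hx] with y hy
    rw [edist_dist, ← ENNReal.ofReal_rpow_of_pos (dist_pos.mpr (Ne.symm hy))]
  rw [step1]
  -- Step 2: layer cake
  rw [lintegral_eq_lintegral_meas_le (volume.restrict A)
    (ae_of_all _ fun y => Real.rpow_nonneg dist_nonneg _) (by fun_prop)]
  -- Step 3: split the time axis at t₀ and estimate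
  have hsplit : Ioi (0:ℝ) = Ioc 0 t₀ ∪ Ioi t₀ := (Ioc_union_Ioi_eq_Ioi ht₀.le).symm
  have hI1 : (∫⁻ t in Ioc 0 t₀, (volume.restrict A) {a | t ≤ dist x a ^ (-α)})
      ≤ volume A * ENNReal.ofReal t₀ := by
    calc (∫⁻ t in Ioc 0 t₀, (volume.restrict A) {a | t ≤ dist x a ^ (-α)})
        ≤ ∫⁻ _t in Ioc 0 t₀, volume A := by
          refine lintegral_mono fun t => ?_
          refine le_trans (measure_mono (subset_univ _)) ?_
          rw [Measure.restrict_apply_univ]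
      _ = volume A * ENNReal.ofReal t₀ := by
          rw [setLIntegral_const, Real.volume_Ioc, sub_zero]
  have hI2 : (∫⁻ t in Ioi t₀, (volume.restrict A) {a | t ≤ dist x a ^ (-α)})
      ≤ ENNReal.ofReal (-t₀ ^ (c + 1) / (c + 1)) * ω := by
    have hb : (∫⁻ t in Ioi t₀, (volume.restrict A) {a | t ≤ dist x a ^ (-α)})
        ≤ ∫⁻ t in Ioi t₀, ENNReal.ofReal (t ^ c) * ω := by
      refine setLIntegral_mono (by fun_prop) fun t ht => ?_
      have ht' : 0 < t := lt_trans ht₀ ht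
      refine le_trans (Measure.restrict_le_self _) ?_
      have hsub : {a : EuclideanSpace ℝ (Fin n) | t ≤ dist x a ^ (-α)} ⊆
          closedBall x (t ^ (-α⁻¹)) := by
        intro a ha
        simp only [mem_setOf_eq] at ha
        have hd : 0 < dist x a := by
          rcases eq_or_lt_of_le (dist_nonneg (x := x) (y := a)) with h | h
          · rw [← h, Real.zero_rpow (neg_ne_zero.mpr hα.ne')] at ha
            exact absurd ha (not_le.mpr ht')
          · exact h
        rw [mem_closedBall, dist_comm]
        calc dist x a = (dist x a ^ (-α)) ^ (-α⁻¹) := by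
              rw [← Real.rpow_mul hd.le, show -α * -α⁻¹ = α * α⁻¹ by ring,
                mul_inv_cancel₀ hα.ne', Real.rpow_one]
          _ ≤ t ^ (-α⁻¹) := by
              apply Real.rpow_le_rpow_of_nonpos ht' ha
              simp [inv_nonneg.mpr hα0]
      refine le_trans (measure_mono hsub) ?_
      rw [MeasureTheory.Measure.addHaar_closedBall _ _ (Real.rpow_nonneg ht'.le _)]
      have he : (t ^ (-α⁻¹)) ^ Module.finrank ℝ (EuclideanSpace ℝ (Fin n)) = t ^ c := by
        rw [finrank_euclideanSpace, Fintype.card_fin, ← Real.rpow_natCast (t ^ (-α⁻¹)) n,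
          ← Real.rpow_mul ht'.le, hcdef]
        congr 1
        field_simp
      rw [he]
    refine hb.trans ?_
    rw [lintegral_mul_const' ω _ hωt]
    gcongr
    rw [← ofReal_integral_eq_lintegral_ofReal (integrableOn_Ioi_rpow_of_lt hc ht₀) ?_]
    · rw [integral_Ioi_rpow_of_lt hc ht₀]
    · filter_upwards [ae_restrict_mem measurableSet_Ioi] with t ht
      exact Real.rpow_nonneg (le_of_lt (ht₀.trans ht)) _
  calc ∫⁻ t in Ioi (0:ℝ), (volume.restrict A) {a | t ≤ dist x a ^ (-α)}
      ≤ (∫⁻ t in Ioc 0 t₀, (volume.restrict A) {a | t ≤ dist x a ^ (-α)}) +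
        ∫⁻ t in Ioi t₀, (volume.restrict A) {a | t ≤ dist x a ^ (-α)} := by
        rw [hsplit]; exact lintegral_union_le _ _ _
    _ ≤ volume A * ENNReal.ofReal t₀ + ENNReal.ofReal (-t₀ ^ (c + 1) / (c + 1)) * ω :=
        add_le_add hI1 hI2
    _ ≤ ENNReal.ofReal ((n:ℝ) / (n - α)) * ω ^ (α / n) * (volume A) ^ (1 - α / n) := by
        have hVA : volume A = ENNReal.ofReal Vr := (ENNReal.ofReal_toReal hAf).symm
        have hωr : ω = ENNReal.ofReal wr := (ENNReal.ofReal_toReal hωt).symm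
        have hq2 : 0 ≤ -t₀ ^ (c + 1) / (c + 1) := by
          rw [div_nonneg_iff]
          exact Or.inr ⟨neg_nonpos.mpr (Real.rpow_nonneg ht₀.le _), hc1.le⟩
        rw [hVA, hωr, ← ENNReal.ofReal_mul hVr.le, ← ENNReal.ofReal_mul hq2,
          ENNReal.ofReal_rpow_of_pos hwr, ENNReal.ofReal_rpow_of_pos hVr,
          ← ENNReal.ofReal_mul (by positivity), ← ENNReal.ofReal_mul (by positivity),
          ← ENNReal.ofReal_add (by positivity) (by positivity)]
        apply ENNReal.ofReal_le_ofReal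
        -- the real computation
        have e1 : Vr = wr * R ^ (n:ℝ) := by rw [hRn]; field_simp
        have e2 : Vr * t₀ = wr * R ^ ((n:ℝ) - α) := by
          rw [e1, ht₀def, mul_assoc, ← Real.rpow_add hR, sub_eq_add_neg]
        have e3 : t₀ ^ (c + 1) = R ^ ((n:ℝ) - α) := by
          rw [ht₀def, ← Real.rpow_mul hR.le]
          congr 1
          rw [hcdef]
          field_simp
          ring
        have e4 : -t₀ ^ (c + 1) / (c + 1) * wr = wr * R ^ ((n:ℝ) - α) * (α / (n - α)) := by
          have hc' : c + 1 = -(((n:ℝ) - α)/α) := by rw [hcdef]; field_simp; ring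
          rw [e3, hc', div_neg, neg_div, neg_neg, div_div_eq_mul_div]
          rw [div_mul_eq_mul_div, div_eq_iff hnα.ne']
          field_simp
        have e5 : wr ^ (α/(n:ℝ)) * Vr ^ (1 - α/(n:ℝ)) = wr * R ^ ((n:ℝ) - α) := by
          rw [e1, Real.mul_rpow hwr.le (Real.rpow_nonneg hR.le _),
            ← Real.rpow_mul hR.le, ← mul_assoc, ← Real.rpow_add hwr]
          have h1 : α/(n:ℝ) + (1 - α/(n:ℝ)) = 1 := by ring
          have h2 : (n:ℝ) * (1 - α/(n:ℝ)) = (n:ℝ) - α := by field_simp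
          rw [h1, h2, Real.rpow_one]
        calc Vr * t₀ + -t₀ ^ (c + 1) / (c + 1) * wr
            = (1 + α/((n:ℝ) - α)) * (wr * R ^ ((n:ℝ) - α)) := by rw [e2, e4]; ring
          _ = (n:ℝ) / ((n:ℝ) - α) * (wr ^ (α/(n:ℝ)) * Vr ^ (1 - α/(n:ℝ))) := by
              rw [e5]
              congr 1
              field_simp
              ring
          _ ≤ (n:ℝ) / ((n:ℝ) - α) * wr ^ (α/(n:ℝ)) * Vr ^ (1 - α/(n:ℝ)) := by
              rw [mul_assoc]

lemma holder3 {X : Type*} [MeasurableSpace X] (μ : Measure X) (f g h : X → ℝ≥0∞)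
    (hf : AEMeasurable f μ) (hg : AEMeasurable g μ) (hh : AEMeasurable h μ)
    {a b c : ℝ} (ha : 0 ≤ a) (hb : 0 ≤ b) (hc : 0 ≤ c) (habc : a + b + c = 1) :
    ∫⁻ x, f x ^ a * g x ^ b * h x ^ c ∂μ ≤
      (∫⁻ x, f x ∂μ) ^ a * (∫⁻ x, g x ∂μ) ^ b * (∫⁻ x, h x ∂μ) ^ c := by
  have key := ENNReal.lintegral_prod_norm_pow_le (μ := μ) Finset.univ
    (f := ![f, g, h]) (hf := fun i _ => by fin_cases i <;> assumption)
    (p := ![a, b, c]) (hp := by simp [Fin.sum_univ_three]; linarith)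
    (h2p := fun i _ => by fin_cases i <;> assumption)
  simpa [Fin.prod_univ_three] using key

/-- Riesz potential estimate (Gilbarg–Trudinger Lemma 7.12): for bounded measurable
`Ω ⊆ ℝⁿ`, `1 ≤ p ≤ q` with `δ = 1/p − 1/q < 1/n`,
`‖I_Ω f‖_{L^q(Ω)} ≤ ((1−δ)/(1/n−δ))^{1−δ} ω_n^{1−1/n} |Ω|^{1/n−δ} ‖f‖_{L^p(Ω)}`,
where `ω_n` is the volume of the unit ball. -/
theorem riesz_potential_estimate (n : ℕ) (hn : 1 ≤ n)
    (Ω : Set (EuclideanSpace ℝ (Fin n))) (hΩm : MeasurableSet Ω)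
    (hΩb : Bornology.IsBounded Ω)
    (p q δ : ℝ) (hp : 1 ≤ p) (hpq : p ≤ q)
    (hδ : δ = 1 / p - 1 / q) (hδn : δ < 1 / n)
    (f : EuclideanSpace ℝ (Fin n) → ℝ) (hf : Measurable f) :
    (∫⁻ x in Ω, (rieszPotential n Ω f x) ^ q) ^ (1 / q) ≤
      ENNReal.ofReal (((1 - δ) / (1 / n - δ)) ^ (1 - δ) *
          (volume (Metric.ball (0 : EuclideanSpace ℝ (Fin n)) 1)).toReal ^ (1 - 1 / (n:ℝ))) *
        (volume Ω) ^ ((1:ℝ) / n - δ) *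
        (∫⁻ x in Ω, ENNReal.ofReal (|f x| ^ p)) ^ (1 / p) := by
  have hn' : (0:ℝ) < n := by exact_mod_cast hn
  have hq1 : 1 ≤ q := hp.trans hpq
  have hp0 : (0:ℝ) < p := by linarith
  have hq0 : (0:ℝ) < q := by linarith
  have hδ0 : 0 ≤ δ := by
    rw [hδ, sub_nonneg]
    exact one_div_le_one_div_of_le hp0 hpq
  have hn1 : 1/(n:ℝ) ≤ 1 := by rw [div_le_one hn']; exact_mod_cast hn
  have hδ1 : δ < 1 := lt_of_lt_of_le hδn hn1
  have h1δ : (0:ℝ) < 1 - δ := by linarith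
  have h1nδ : (0:ℝ) < 1/(n:ℝ) - δ := by linarith
  set r : ℝ := (1 - δ)⁻¹ with hrdef
  have hr0 : 0 < r := inv_pos.mpr h1δ
  set α : ℝ := ((n:ℝ) - 1) * r with hαdef
  have hge : (1:ℝ) ≤ (n:ℝ) := by exact_mod_cast hn
  have hn1' : (0:ℝ) ≤ (n:ℝ) - 1 := by linarith
  have hα0 : 0 ≤ α := mul_nonneg hn1' hr0.le
  have hδn' : δ * n < 1 := (lt_div_iff₀ hn').mp hδn
  have hαn : α < n := by
    rw [hαdef, hrdef, ← div_eq_mul_inv, div_lt_iff₀ h1δ]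
    nlinarith
  have hnα : (0:ℝ) < (n:ℝ) - α := by linarith
  set ω := volume (Metric.ball (0 : EuclideanSpace ℝ (Fin n)) 1) with hωdef
  have hω0 : ω ≠ 0 := (Metric.measure_ball_pos _ _ one_pos).ne'
  have hωt : ω ≠ ∞ := measure_ball_lt_top.ne
  have hwr : 0 < ω.toReal := ENNReal.toReal_pos hω0 hωt
  have hVt : volume Ω ≠ ∞ := hΩb.measure_lt_top.ne
  set K := ENNReal.ofReal ((1 - δ)/(1/(n:ℝ) - δ)) * ω ^ (α/(n:ℝ)) *
    (volume Ω) ^ (1 - α/(n:ℝ)) with hKdef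
  have hC0 : (n:ℝ)/((n:ℝ) - α) = (1 - δ)/(1/(n:ℝ) - δ) := by
    rw [div_eq_div_iff hnα.ne' h1nδ.ne', hαdef, hrdef]
    field_simp
    ring
  have hK : ∀ z, (∫⁻ y in Ω, edist z y ^ (-α)) ≤ K := by
    intro z
    have h := riesz_aux n hn α hα0 hαn Ω hVt z
    rwa [hC0] at h
  have hKy : ∀ y, (∫⁻ x in Ω, edist x y ^ (-α)) ≤ K := by
    intro y
    have : ∀ x : EuclideanSpace ℝ (Fin n), edist x y = edist y x := fun x => edist_comm x y
    simp_rw [this]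
    exact hK y
  have hKt : K ≠ ∞ := by
    refine ENNReal.mul_ne_top (ENNReal.mul_ne_top ENNReal.ofReal_ne_top ?_) ?_
    · exact ENNReal.rpow_ne_top_of_nonneg (div_nonneg hα0 hn'.le) hωt
    · refine ENNReal.rpow_ne_top_of_nonneg ?_ hVt
      have := (div_lt_one hn').mpr hαn
      linarith
  set F := ∫⁻ y in Ω, ENNReal.ofReal (|f y| ^ p) with hFdef
  set A : EuclideanSpace ℝ (Fin n) → ℝ≥0∞ :=
    fun x => ∫⁻ y in Ω, edist x y ^ (-α) * ENNReal.ofReal (|f y| ^ p) with hAdef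
  have hb' : 0 ≤ 1 - 1/p := by
    rw [sub_nonneg]
    exact (div_le_one hp0).mpr hp
  have hsum : 1/q + (1 - 1/p) + δ = 1 := by rw [hδ]; ring
  -- null singleton
  have hxnull : ∀ x : EuclideanSpace ℝ (Fin n), volume ({x} : Set (EuclideanSpace ℝ (Fin n))) = 0 := by
    intro x
    rw [← Metric.closedBall_zero, MeasureTheory.Measure.addHaar_closedBall _ _ le_rfl]
    rw [finrank_euclideanSpace, Fintype.card_fin, zero_pow (by omega : n ≠ 0)]
    simp
  -- Step 1: pointwise Hoelder bound
  have key1 : ∀ x, rieszPotential n Ω f x ≤ A x ^ (1/q) * K ^ (1 - 1/p) * F ^ δ := by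
    intro x
    have heq : rieszPotential n Ω f x = ∫⁻ y in Ω,
        (edist x y ^ (-α) * ENNReal.ofReal (|f y| ^ p)) ^ (1/q) *
          (edist x y ^ (-α)) ^ (1 - 1/p) * (ENNReal.ofReal (|f y| ^ p)) ^ δ := by
      rw [rieszPotential]
      apply lintegral_congr_ae
      have hx : ∀ᵐ y ∂(volume.restrict Ω), y ≠ x := by
        refine ae_restrict_of_ae ?_
        rw [ae_iff]
        refine measure_mono_null ?_ (hxnull x)
        intro y hy
        simp only [ne_eq, not_not, Set.mem_setOf_eq] at hy
        simp [hy]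
      filter_upwards [hx] with y hy
      have he0 : edist x y ≠ 0 := by simpa [edist_eq_zero] using (Ne.symm hy)
      have het : edist x y ≠ ∞ := edist_ne_top x y
      rw [ENNReal.mul_rpow_of_nonneg _ _ (by positivity : (0:ℝ) ≤ 1/q)]
      rw [show ∀ a b c d : ℝ≥0∞, a * b * c * d = (a * c) * (b * d) from
        fun a b c d => by ring]
      rw [← ENNReal.rpow_mul, ← ENNReal.rpow_mul,
        ← ENNReal.rpow_add _ _ he0 het,
        ← ENNReal.rpow_add_of_nonneg _ _ (by positivity : (0:ℝ) ≤ 1/q) hδ0]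
      congr 1
      · congr 1
        have hfin : -α * (1/q) + -α * (1 - 1/p) = -α * (1 - δ) := by
          have h' : 1/q + (1 - 1/p) = 1 - δ := by rw [hδ]; ring
          calc -α * (1/q) + -α * (1 - 1/p) = -α * (1/q + (1 - 1/p)) := by ring
            _ = -α * (1 - δ) := by rw [h']
        rw [hfin, hαdef, hrdef]
        field_simp
        ring
      · have hqp : 1/q + δ = 1/p := by rw [hδ]; ring
        rw [hqp, ENNReal.ofReal_rpow_of_nonneg (by positivity) (by positivity),
          ← Real.rpow_mul (abs_nonneg _), mul_one_div, div_self hp0.ne', Real.rpow_one]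
    rw [heq]
    refine le_trans (holder3 (volume.restrict Ω) _ _ _ (by fun_prop) (by fun_prop)
      (by fun_prop) (by positivity) hb' hδ0 hsum) ?_
    gcongr
    exact hK x
  -- Step 2: integrate the q-th power
  have key2 : (∫⁻ x in Ω, rieszPotential n Ω f x ^ q) ≤
      K ^ ((1 - δ) * q) * F ^ (q / p) := by
    have e1 : ∀ x, rieszPotential n Ω f x ^ q ≤
        A x * (K ^ ((1 - 1/p) * q) * F ^ (δ * q)) := by
      intro x
      calc rieszPotential n Ω f x ^ q ≤ (A x ^ (1/q) * K ^ (1 - 1/p) * F ^ δ) ^ q :=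
            ENNReal.rpow_le_rpow (key1 x) hq0.le
        _ = A x * (K ^ ((1 - 1/p) * q) * F ^ (δ * q)) := by
            rw [ENNReal.mul_rpow_of_nonneg _ _ hq0.le, ENNReal.mul_rpow_of_nonneg _ _ hq0.le,
              ← ENNReal.rpow_mul, ← ENNReal.rpow_mul, ← ENNReal.rpow_mul,
              one_div_mul_cancel hq0.ne', ENNReal.rpow_one, mul_assoc]
    have hA_meas : AEMeasurable A (volume.restrict Ω) := by
      refine Measurable.aemeasurable ?_
      apply Measurable.lintegral_prod_right (f := fun x y => edist x y ^ (-α) * ENNReal.ofReal (|f y| ^ p))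
      fun_prop
    have hswap : (∫⁻ x in Ω, A x) ≤ K * F := by
      rw [hAdef]
      rw [lintegral_lintegral_swap (by fun_prop)]
      calc ∫⁻ y in Ω, ∫⁻ x in Ω, edist x y ^ (-α) * ENNReal.ofReal (|f y| ^ p)
          = ∫⁻ y in Ω, (∫⁻ x in Ω, edist x y ^ (-α)) * ENNReal.ofReal (|f y| ^ p) := by
            apply lintegral_congr fun y => ?_
            rw [lintegral_mul_const' _ _ ENNReal.ofReal_ne_top]
        _ ≤ ∫⁻ y in Ω, K * ENNReal.ofReal (|f y| ^ p) := by
            apply lintegral_mono fun y => ?_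
            exact mul_le_mul_left (hKy y) _
        _ = K * F := lintegral_const_mul' _ _ hKt
    calc (∫⁻ x in Ω, rieszPotential n Ω f x ^ q)
        ≤ ∫⁻ x in Ω, A x * (K ^ ((1 - 1/p) * q) * F ^ (δ * q)) := lintegral_mono e1
      _ = (∫⁻ x in Ω, A x) * (K ^ ((1 - 1/p) * q) * F ^ (δ * q)) :=
          lintegral_mul_const'' _ hA_meas
      _ ≤ (K * F) * (K ^ ((1 - 1/p) * q) * F ^ (δ * q)) := by gcongr
      _ = (K * K ^ ((1 - 1/p) * q)) * (F * F ^ (δ * q)) := by ring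
      _ = K ^ (1 + (1 - 1/p) * q) * F ^ (1 + δ * q) := by
          rw [ENNReal.rpow_add_of_nonneg _ _ zero_le_one (by positivity),
            ENNReal.rpow_add_of_nonneg _ _ zero_le_one (by positivity),
            ENNReal.rpow_one, ENNReal.rpow_one]
      _ = K ^ ((1 - δ) * q) * F ^ (q / p) := by
          congr 2
          · rw [hδ]; field_simp; ring
          · rw [hδ]; field_simp; ring
  -- Step 3: take the (1/q)-th power and identify the constant
  calc (∫⁻ x in Ω, rieszPotential n Ω f x ^ q) ^ (1/q)
      ≤ (K ^ ((1 - δ) * q) * F ^ (q / p)) ^ (1/q) := ENNReal.rpow_le_rpow key2 (by positivity)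
    _ = K ^ (1 - δ) * F ^ (1/p) := by
        rw [ENNReal.mul_rpow_of_nonneg _ _ (by positivity : (0:ℝ) ≤ 1/q),
          ← ENNReal.rpow_mul, ← ENNReal.rpow_mul]
        congr 2
        · field_simp
        · field_simp
    _ = ENNReal.ofReal (((1 - δ) / (1/(n:ℝ) - δ)) ^ (1 - δ) *
          ω.toReal ^ (1 - 1/(n:ℝ))) * (volume Ω) ^ ((1:ℝ)/n - δ) * F ^ (1/p) := by
        congr 1
        rw [hKdef, ENNReal.mul_rpow_of_nonneg _ _ h1δ.le,
          ENNReal.mul_rpow_of_nonneg _ _ h1δ.le,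
          ENNReal.ofReal_rpow_of_pos (by positivity),
          ← ENNReal.rpow_mul, ← ENNReal.rpow_mul]
        have hexp1 : α/(n:ℝ) * (1 - δ) = 1 - 1/(n:ℝ) := by
          rw [hαdef, hrdef]; field_simp
        have hexp2 : (1 - α/(n:ℝ)) * (1 - δ) = 1/(n:ℝ) - δ := by
          rw [hαdef, hrdef]; field_simp; ring
        rw [hexp1, hexp2, ENNReal.ofReal_mul (by positivity)]
        congr 2
        rw [ENNReal.toReal_rpow, ENNReal.ofReal_toReal
          (ENNReal.rpow_ne_top_of_nonneg (by linarith) hωt)]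

end
end
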